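/- For every natural number l, the kernel K_l is three times continuously differentiable on the triangle Δ(r_m, r_M) = {(p,r) ∈ ℝ² : r_m ≤ r ≤ p ≤ r_M} (that is, K_l is ContDiffOn of order 3 on Δ(r_m, r_M)), despite the appearance of the factor √(p − r) in its defining formula. -/

import Mathlib

noncomputable section
open Real MeasureTheory

/-- Legendre polynomial of degree `l` (Rodrigues' formula). -/
def legP (l : ℕ) (x : ℝ) : ℝ :=
  (1 / (2 ^ l * Nat.factorial l : ℝ)) * iteratedDeriv l (fun y : ℝ => (y ^ 2 - 1) ^ l) x
def Q1 (R p r : ℝ) : ℝ := 2 * π * r ^ 2 * Real.sqrt (p ^ 2 - R ^ 2) / (R * p * Real.sqrt (p + r))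
def Q2 (p r : ℝ) : ℝ := 2 * π * r / p
def Q3 (R p r : ℝ) : ℝ := Real.sqrt (p ^ 2 - R ^ 2) * Real.sqrt (p + r) / p ^ 2
def Q4 (R p r : ℝ) : ℝ := R * r / p ^ 2

/-- The kernel `K_l` in its algebraic form. -/
def Kalg (R : ℝ) (l : ℕ) (p r : ℝ) : ℝ :=
  ∑ σ ∈ ({-1, 1} : Finset ℝ),
    σ ^ l * (Q1 R p r - σ * Q2 p r * Real.sqrt (p - r)) *
      legP l (Q3 R p r * Real.sqrt (p - r) + σ * Q4 R p r)

/-- The Rodrigues polynomial (up to normalization). -/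
def legQ (l : ℕ) : Polynomial ℝ :=
  Polynomial.derivative^[l] (((Polynomial.X : Polynomial ℝ) ^ 2 - 1) ^ l)

lemma iteratedDeriv_polyEval (n : ℕ) (p : Polynomial ℝ) (x : ℝ) :
    iteratedDeriv n (fun y : ℝ => p.eval y) x = (Polynomial.derivative^[n] p).eval x := by
  induction n generalizing p with
  | zero => simp
  | succ n ih =>
    rw [iteratedDeriv_succ', Function.iterate_succ_apply]
    have h : deriv (fun y : ℝ => p.eval y) = fun y : ℝ => (Polynomial.derivative p).eval y := by
      funext y; exact Polynomial.deriv (p := p)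
    rw [h]; exact ih _

lemma legP_eq (l : ℕ) (x : ℝ) :
    legP l x = (1 / (2 ^ l * Nat.factorial l : ℝ)) * (legQ l).eval x := by
  have h : (fun y : ℝ => (y ^ 2 - 1) ^ l)
      = fun y : ℝ => ((((Polynomial.X : Polynomial ℝ) ^ 2 - 1) ^ l)).eval y := by
    funext y; simp
  rw [legP, h, iteratedDeriv_polyEval, legQ]

lemma legP_neg (l : ℕ) (x : ℝ) : legP l (-x) = (-1) ^ l * legP l x := by
  have h := iteratedDeriv_comp_neg l (fun y : ℝ => (y ^ 2 - 1) ^ l) x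
  have h2 : iteratedDeriv l (fun y : ℝ => (y ^ 2 - 1) ^ l) x
      = (-1 : ℝ) ^ l * iteratedDeriv l (fun y : ℝ => (y ^ 2 - 1) ^ l) (-x) := by
    rw [← smul_eq_mul, ← h]; congr 1; funext y; rw [neg_sq]
  have hpow : ((-1 : ℝ) ^ l) * ((-1 : ℝ) ^ l) = 1 := by
    rw [← pow_add, ← two_mul, pow_mul]; norm_num
  rw [legP, legP, h2]
  linear_combination (-(1 / (2 ^ l * Nat.factorial l : ℝ) *
    iteratedDeriv l (fun y : ℝ => (y ^ 2 - 1) ^ l) (-x))) * hpow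

/-- Even/odd decomposition: for any polynomial `q` there are smooth functions `E`, `O` of
`(x, u²)` expressing `q(x+u)+q(x−u)` and `q(x+u)−q(x−u)`. -/
lemma exists_EO (q : Polynomial ℝ) :
    ∃ E O : ℝ × ℝ → ℝ, ContDiff ℝ 3 E ∧ ContDiff ℝ 3 O ∧
      ∀ x u : ℝ, q.eval (x + u) + q.eval (x - u) = E (x, u ^ 2) ∧
        q.eval (x + u) - q.eval (x - u) = u * O (x, u ^ 2) := by
  induction q using Polynomial.induction_on with
  | C a =>
    exact ⟨fun _ => 2 * a, fun _ => 0, contDiff_const, contDiff_const, by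
      intro x u; simp [Polynomial.eval_C]; ring⟩
  | add p q hp hq =>
    obtain ⟨E1, O1, hE1, hO1, h1⟩ := hp
    obtain ⟨E2, O2, hE2, hO2, h2⟩ := hq
    refine ⟨fun z => E1 z + E2 z, fun z => O1 z + O2 z, hE1.add hE2, hO1.add hO2, ?_⟩
    intro x u
    obtain ⟨ha1, hb1⟩ := h1 x u
    obtain ⟨ha2, hb2⟩ := h2 x u
    constructor
    · simp only [Polynomial.eval_add]; linarith
    · simp only [Polynomial.eval_add]; nlinarith [hb1, hb2]
  | monomial n a ih =>
    obtain ⟨E, O, hE, hO, h⟩ := ih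
    refine ⟨fun z => z.1 * E z + z.2 * O z, fun z => z.1 * O z + E z,
      (contDiff_fst.mul hE).add (contDiff_snd.mul hO),
      (contDiff_fst.mul hO).add hE, ?_⟩
    intro x u
    obtain ⟨ha, hb⟩ := h x u
    have he : ∀ y : ℝ, (Polynomial.C a * Polynomial.X ^ (n + 1)).eval y
        = y * (Polynomial.C a * Polynomial.X ^ n).eval y := by
      intro y; simp [pow_succ]; ring
    rw [he, he]
    constructor
    · linear_combination x * ha + u * hb
    · linear_combination x * hb + u * ha

/-- The kernel `K_l` is three times continuously differentiable on the closed triangle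
`Δ(r_m, r_M) = {(p, r) : r_m ≤ r ≤ p ≤ r_M}`. -/
theorem kernel_contDiffOn_triangle
    (R rm rM : ℝ) (hR : 0 < R) (hRm : R < rm) (hmM : rm < rM) (l : ℕ) :
    ContDiffOn ℝ 3 (fun q : ℝ × ℝ => Kalg R l q.1 q.2)
      {q : ℝ × ℝ | rm ≤ q.2 ∧ q.2 ≤ q.1 ∧ q.1 ≤ rM} := by
  obtain ⟨E, O, hE, hO, hEO⟩ := exists_EO (legQ l)
  set c : ℝ := 1 / (2 ^ l * Nat.factorial l : ℝ) with hc
  set G : ℝ × ℝ → ℝ := fun z =>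
    c * (Q1 R z.1 z.2 * E (Q4 R z.1 z.2, (Q3 R z.1 z.2) ^ 2 * (z.1 - z.2))
      - Q2 z.1 z.2 * Q3 R z.1 z.2 * (z.1 - z.2) *
        O (Q4 R z.1 z.2, (Q3 R z.1 z.2) ^ 2 * (z.1 - z.2))) with hG
  have hGsmooth : ∀ z : ℝ × ℝ, R < z.1 → 0 < z.2 → ContDiffAt ℝ 3 G z := by
    intro z hp hr
    have hp0 : 0 < z.1 := lt_trans hR hp
    have hA : ContDiffAt ℝ 3 (fun z : ℝ × ℝ => Real.sqrt (z.1 ^ 2 - R ^ 2)) z := by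
      have hne : z.1 ^ 2 - R ^ 2 ≠ 0 := by nlinarith
      exact (Real.contDiffAt_sqrt hne).comp z ((contDiffAt_fst.pow 2).sub contDiffAt_const)
    have hB : ContDiffAt ℝ 3 (fun z : ℝ × ℝ => Real.sqrt (z.1 + z.2)) z := by
      have hne : z.1 + z.2 ≠ 0 := by nlinarith
      exact (Real.contDiffAt_sqrt hne).comp z (contDiffAt_fst.add contDiffAt_snd)
    have hBne : Real.sqrt (z.1 + z.2) ≠ 0 := by
      refine ne_of_gt (Real.sqrt_pos.2 ?_); nlinarith
    have hQ1 : ContDiffAt ℝ 3 (fun z : ℝ × ℝ => Q1 R z.1 z.2) z := by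
      simp only [Q1]
      exact (((contDiffAt_const.mul (contDiffAt_snd.pow 2)).mul hA).div
        ((contDiffAt_const.mul contDiffAt_fst).mul hB)
        (by positivity))
    have hQ2 : ContDiffAt ℝ 3 (fun z : ℝ × ℝ => Q2 z.1 z.2) z := by
      simp only [Q2]
      exact (contDiffAt_const.mul contDiffAt_snd).div contDiffAt_fst (ne_of_gt hp0)
    have hQ3 : ContDiffAt ℝ 3 (fun z : ℝ × ℝ => Q3 R z.1 z.2) z := by
      simp only [Q3]
      exact (hA.mul hB).div (contDiffAt_fst.pow 2) (by positivity)
    have hQ4 : ContDiffAt ℝ 3 (fun z : ℝ × ℝ => Q4 R z.1 z.2) z := by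
      simp only [Q4]
      exact (contDiffAt_const.mul contDiffAt_snd).div (contDiffAt_fst.pow 2) (by positivity)
    have harg : ContDiffAt ℝ 3
        (fun z : ℝ × ℝ => ((Q4 R z.1 z.2, (Q3 R z.1 z.2) ^ 2 * (z.1 - z.2)) : ℝ × ℝ)) z :=
      hQ4.prodMk ((hQ3.pow 2).mul (contDiffAt_fst.sub contDiffAt_snd))
    have hEc : ContDiffAt ℝ 3
        (fun z : ℝ × ℝ => E (Q4 R z.1 z.2, (Q3 R z.1 z.2) ^ 2 * (z.1 - z.2))) z :=
      hE.contDiffAt.comp z harg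
    have hOc : ContDiffAt ℝ 3
        (fun z : ℝ × ℝ => O (Q4 R z.1 z.2, (Q3 R z.1 z.2) ^ 2 * (z.1 - z.2))) z :=
      hO.contDiffAt.comp z harg
    exact contDiffAt_const.mul ((hQ1.mul hEc).sub
      (((hQ2.mul hQ3).mul (contDiffAt_fst.sub contDiffAt_snd)).mul hOc))
  have hsub : {q : ℝ × ℝ | rm ≤ q.2 ∧ q.2 ≤ q.1 ∧ q.1 ≤ rM}
      ⊆ {z : ℝ × ℝ | R < z.1 ∧ 0 < z.2} := by
    rintro z ⟨h1, h2, h3⟩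
    exact ⟨lt_of_lt_of_le hRm (le_trans h1 h2), lt_of_lt_of_le (lt_trans hR hRm) h1⟩
  have hGon : ContDiffOn ℝ 3 G {q : ℝ × ℝ | rm ≤ q.2 ∧ q.2 ≤ q.1 ∧ q.1 ≤ rM} := by
    intro z hz
    obtain ⟨h1, h2⟩ := hsub hz
    exact (hGsmooth z h1 h2).contDiffWithinAt
  refine hGon.congr ?_
  rintro z ⟨h1, h2, h3⟩
  -- pointwise identity
  set p := z.1
  set r := z.2
  set s := Real.sqrt (p - r) with hs
  have hs2 : s ^ 2 = p - r := Real.sq_sqrt (by linarith)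
  set a := Q4 R p r with ha
  set u := Q3 R p r * s with hu
  have hu2 : u ^ 2 = (Q3 R p r) ^ 2 * (p - r) := by rw [hu, mul_pow, hs2]
  obtain ⟨hsum, hdiff⟩ := hEO a u
  have hexp : Kalg R l p r =
      (-1 : ℝ) ^ l * (Q1 R p r - (-1) * Q2 p r * s) * legP l (Q3 R p r * s + (-1) * Q4 R p r)
      + (1 : ℝ) ^ l * (Q1 R p r - 1 * Q2 p r * s) * legP l (Q3 R p r * s + 1 * Q4 R p r) := by
    rw [Kalg, Finset.sum_pair (by norm_num : (-1 : ℝ) ≠ 1)]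
  have harg1 : Q3 R p r * s + (-1) * Q4 R p r = -(a - u) := by rw [ha, hu]; ring
  have harg2 : Q3 R p r * s + 1 * Q4 R p r = a + u := by rw [ha, hu]; ring
  have hpow : ((-1 : ℝ) ^ l) * ((-1 : ℝ) ^ l) = 1 := by
    rw [← pow_add, ← two_mul, pow_mul]; norm_num
  show Kalg R l p r = G z
  rw [hexp, harg1, harg2, legP_neg, legP_eq, legP_eq, hG]
  simp only [← hc, ← ha]
  rw [← hu2]
  have hq2 : Q2 z.1 z.2 = Q2 p r := rfl
  linear_combination ((Q1 R p r + Q2 p r * s) * (c * (legQ l).eval (a - u))) * hpow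
    + (c * Q1 R p r) * hsum - (c * Q2 p r * s) * hdiff
    - (c * Q2 p r * Q3 R p r * O (a, u ^ 2)) * hs2
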